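/- Let n,m be positive integers, θ>0, and ξ,ξ'>0 with ξ ≠ ξ'. Let E = Σ_{j=1}^n z_j ∂/∂z_j + Σ_{k=1}^m w_k ∂/∂w_k be the Euler operator acting on polynomials. Then for all p,q ∈ ℂ[z_1,…,z_n,w_1,…,w_m] one has ⟨E p, q⟩'_{n,m,θ} = ⟨p, E q⟩'_{n,m,θ}. -/

import Mathlib

open MeasureTheory MvPolynomial Complex

noncomputable section

/-- The cube of angles `[0, 2π]^n`. -/
def cube (n : ℕ) : Set (Fin n → ℝ) := Set.univ.pi fun _ => Set.Icc (0 : ℝ) (2 * Real.pi)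

/-- The point of the torus `T_ξ^n` with angles `x`. -/
def torus (n : ℕ) (ξ : ℝ) (x : Fin n → ℝ) : Fin n → ℂ :=
  fun j => (ξ : ℂ) * Complex.exp (Complex.I * (x j : ℂ))

/-- `Δ_N(z; θ) = ∏_{j<k} ((1 - z_j/z_k)(1 - z_k/z_j))^θ`, whose base equals
`|1 - z_j/z_k|^2 ≥ 0` on a torus, so it is defined via the real power. -/
def DeltaN (N : ℕ) (θ : ℝ) (z : Fin N → ℂ) : ℝ :=
  ∏ j : Fin N, ∏ k : Fin N,
    if j < k then (‖1 - z j / z k‖ ^ 2) ^ θ else 1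

/-- `Δ_{n,m}(z,w;θ) = Δ_n(z;θ) Δ_m(w;1/θ) / ∏_{j,k} (1 - z_j/w_k)(1 - w_k/z_j)`. -/
def DeltaNM (n m : ℕ) (θ : ℝ) (z : Fin n → ℂ) (w : Fin m → ℂ) : ℂ :=
  ((DeltaN n θ z * DeltaN m θ⁻¹ w : ℝ) : ℂ) /
    ∏ j : Fin n, ∏ k : Fin m, ((1 - z j / w k) * (1 - w k / z j))

/-- `q*(v) = conj (q(1/conj v))`. -/
def starEval {σ : Type*} (q : MvPolynomial σ ℂ) (v : σ → ℂ) : ℂ :=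
  starRingEnd ℂ (MvPolynomial.eval (fun i => ((starRingEnd ℂ) (v i))⁻¹) q)

/-- The sesquilinear product `⟨p,q⟩'_{n,m,θ}` with radii `ξ, ξ'`. -/
def sprod (n m : ℕ) (θ ξ ξ' : ℝ) (p q : MvPolynomial (Fin n ⊕ Fin m) ℂ) : ℂ :=
  ((1 / (n.factorial * m.factorial * (2 * Real.pi) ^ (n + m)) : ℝ) : ℂ) *
    ∫ x in cube n, ∫ y in cube m,
      DeltaNM n m θ (torus n ξ x) (torus m ξ' y) *
        MvPolynomial.eval (Sum.elim (torus n ξ x) (torus m ξ' y)) p *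
        starEval q (Sum.elim (torus n ξ x) (torus m ξ' y))

/-- The Euler operator `E = Σ_v x_v ∂/∂x_v` on polynomials. -/
def eulerOp {σ : Type*} [Fintype σ] (p : MvPolynomial σ ℂ) : MvPolynomial σ ℂ :=
  ∑ v : σ, MvPolynomial.X v * MvPolynomial.pderiv v p



def IocCube (k : ℕ) : Set (Fin k → ℝ) := Set.univ.pi fun _ => Set.Ioc (0 : ℝ) (2 * Real.pi)

lemma cube_ae_eq (k : ℕ) : (cube k : Set (Fin k → ℝ)) =ᵐ[volume] IocCube k := by
  rw [MeasureTheory.ae_eq_set]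
  constructor
  · apply measure_mono_null (s := cube k \ IocCube k)
      (t := ⋃ i : Fin k, {x : Fin k → ℝ | x i = 0})
    · intro x hx
      obtain ⟨h1, h2⟩ := hx
      have h2' : ¬ ∀ i, x i ∈ Set.Ioc (0:ℝ) (2*Real.pi) := by
        intro hc; exact h2 fun i _ => hc i
      push_neg at h2'
      obtain ⟨i, hi⟩ := h2'
      have hx' : x i ∈ Set.Icc (0:ℝ) (2*Real.pi) := h1 i trivial
      simp only [Set.mem_iUnion, Set.mem_setOf_eq]
      refine ⟨i, ?_⟩
      rcases lt_or_eq_of_le hx'.1 with h | h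
      · exact absurd ⟨h, hx'.2⟩ hi
      · exact h.symm
    · apply measure_iUnion_null
      intro i
      rw [MeasureTheory.volume_pi]
      exact MeasureTheory.Measure.pi_hyperplane _ i 0
  · have : IocCube k \ cube k = ∅ := by
      ext x
      constructor
      · rintro ⟨h1, h2⟩
        exact h2 fun i _ => ⟨(h1 i trivial).1.le, (h1 i trivial).2⟩
      · exact fun h => h.elim
    simp [this]

lemma restrict_IocCube (k : ℕ) :
    (volume : Measure (Fin k → ℝ)).restrict (IocCube k)
      = Measure.pi (fun _ : Fin k => volume.restrict (Set.Ioc (0:ℝ) (2 * Real.pi))) := by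
  refine (Measure.pi_eq (μ := fun _ : Fin k => volume.restrict (Set.Ioc (0:ℝ) (2 * Real.pi)))
    fun s hs => ?_).symm
  rw [Measure.restrict_apply (MeasurableSet.univ_pi hs)]
  rw [IocCube, ← Set.pi_inter_distrib, MeasureTheory.volume_pi, Measure.pi_pi]
  simp_rw [Measure.restrict_apply (hs _)]

theorem shift_integral_eq {k : ℕ} (f : (Fin k → ℝ) → ℂ) (hf : Measurable f)
    (hper : ∀ (x : Fin k → ℝ) (u : Fin k → ℤ),
      f (fun i => x i + (2 * Real.pi) * u i) = f x) (φ : ℝ) :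
    ∫ x in cube k, f (fun i => x i + φ) = ∫ x in cube k, f x := by
  haveI : Fact (0 < 2 * Real.pi) := ⟨Real.two_pi_pos⟩
  set A := AddCircle (2 * Real.pi) with hA
  set Φ : (Fin k → ℝ) → (Fin k → A) := fun x i => (x i : A) with hΦ
  have hΦmeas : Measurable Φ :=
    measurable_pi_iff.2 fun i => AddCircle.measurable_mk'.comp (measurable_pi_apply i)
  have mp : MeasurePreserving Φ (volume.restrict (IocCube k)) volume := by
    rw [restrict_IocCube]
    have h0 : (volume : Measure (Fin k → A)) = Measure.pi fun _ => volume := by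
      rw [MeasureTheory.volume_pi]
    rw [h0]
    refine MeasureTheory.measurePreserving_pi _ _ (fun i => ?_)
    have := AddCircle.measurePreserving_mk (2 * Real.pi) 0
    simpa using this
  set L : (Fin k → A) → (Fin k → ℝ) :=
    fun u i => ((AddCircle.equivIoc (2 * Real.pi) 0 (u i) : Set.Ioc (0:ℝ) (0 + 2*Real.pi)) : ℝ)
    with hL
  have hLmeas : Measurable L := by
    refine measurable_pi_iff.2 fun i => ?_
    exact measurable_subtype_coe.comp
      (((AddCircle.measurableEquivIoc (2 * Real.pi) 0).measurable).comp (measurable_pi_apply i))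
  set fb : (Fin k → A) → ℂ := f ∘ L with hfbdef
  have hfb : Measurable fb := hf.comp hLmeas
  have hfbΦ : ∀ z, fb (Φ z) = f z := by
    intro z
    have hL' : L (Φ z) = fun i => z i + (2 * Real.pi) * ((-(toIocDiv Real.two_pi_pos 0 (z i)) : ℤ) : ℝ) := by
      funext i
      have h1 : (AddCircle.equivIoc (2 * Real.pi) 0 ((z i : A))) =
          ⟨toIocMod Real.two_pi_pos 0 (z i), toIocMod_mem_Ioc _ 0 _⟩ := by
        apply QuotientAddGroup.equivIocMod_coe
      show ((AddCircle.equivIoc (2 * Real.pi) 0 ((z i : A))) : ℝ) = _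
      rw [h1]
      have h3 : ((⟨toIocMod Real.two_pi_pos 0 (z i), toIocMod_mem_Ioc _ 0 _⟩ :
          Set.Ioc (0:ℝ) (0 + 2 * Real.pi)) : ℝ) = toIocMod Real.two_pi_pos 0 (z i) := rfl
      rw [h3, ← self_sub_toIocDiv_zsmul Real.two_pi_pos 0 (z i)]
      push_cast [zsmul_eq_mul]
      ring
    calc fb (Φ z) = f (L (Φ z)) := rfl
      _ = f z := by rw [hL']; exact hper z _
  have key : ∀ c : ℝ,
      (∫ x in cube k, f (fun i => x i + c)) = ∫ u : Fin k → A, fb (u + fun _ => (c : A)) := by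
    intro c
    rw [MeasureTheory.setIntegral_congr_set (cube_ae_eq k)]
    have hg : Measurable fun u : Fin k → A => fb (u + fun _ => (c : A)) :=
      hfb.comp (measurable_add_const _)
    have heq : ∀ x : Fin k → ℝ,
        f (fun i => x i + c) = fb (Φ x + fun _ => (c : A)) := by
      intro x
      have : Φ x + (fun _ => (c : A)) = Φ (fun i => x i + c) := by
        funext i
        show (x i : A) + (c : A) = ((x i + c : ℝ) : A)
        rw [AddCircle.coe_add]
      rw [this, hfbΦ]
    calc (∫ x in IocCube k, f fun i => x i + c)
        = ∫ x in IocCube k, fb (Φ x + fun _ => (c : A)) := by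
          refine integral_congr_ae (Filter.Eventually.of_forall fun x => heq x)
      _ = ∫ u, fb (u + fun _ => (c : A)) ∂(Measure.map Φ (volume.restrict (IocCube k))) := by
          rw [MeasureTheory.integral_map hΦmeas.aemeasurable hg.aestronglyMeasurable]
      _ = ∫ u : Fin k → A, fb (u + fun _ => (c : A)) := by rw [mp.map_eq]
  have k0' : (∫ x in cube k, f x) = ∫ u : Fin k → A, fb (u + fun _ => ((0:ℝ) : A)) := by
    simpa using key 0
  rw [key φ, k0']
  rw [MeasureTheory.integral_add_right_eq_self fb (fun _ => ((0:ℝ) : A)),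
    MeasureTheory.integral_add_right_eq_self fb (fun _ => ((φ:ℝ) : A))]





-- basic torus lemmas
lemma torus_ne_zero {n : ℕ} {ξ : ℝ} (hξ : 0 < ξ) (x : Fin n → ℝ) (j : Fin n) :
    torus n ξ x j ≠ 0 := by
  simp only [torus]
  exact mul_ne_zero (by exact_mod_cast hξ.ne') (Complex.exp_ne_zero _)

lemma abs_torus {n : ℕ} {ξ : ℝ} (hξ : 0 ≤ ξ) (x : Fin n → ℝ) (j : Fin n) :
    ‖torus n ξ x j‖ = ξ := by
  simp only [torus, norm_mul, Complex.norm_exp, Complex.norm_real, Real.norm_eq_abs, _root_.abs_of_nonneg hξ]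
  have : (Complex.I * (x j : ℂ)).re = 0 := by simp
  rw [this, Real.exp_zero, mul_one]

lemma torus_shift {n : ℕ} (ξ : ℝ) (x : Fin n → ℝ) (φ : ℝ) :
    torus n ξ (fun j => x j + φ) = fun j => Complex.exp (Complex.I * φ) * torus n ξ x j := by
  funext j
  simp only [torus]
  push_cast
  rw [mul_add, Complex.exp_add]
  ring

lemma torus_periodic {n : ℕ} (ξ : ℝ) (x : Fin n → ℝ) (u : Fin n → ℤ) :
    torus n ξ (fun j => x j + (2 * Real.pi) * u j) = torus n ξ x := by
  funext j
  simp only [torus]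
  push_cast
  rw [mul_add, Complex.exp_add]
  have : Complex.I * (2 * Real.pi * (u j : ℂ)) = (u j : ℤ) * (2 * Real.pi * Complex.I) := by
    push_cast; ring
  rw [this, Complex.exp_int_mul_two_pi_mul_I, mul_one]

lemma deltaN_smul {N : ℕ} (θ : ℝ) (z : Fin N → ℂ) (c : ℂ) (hc : c ≠ 0) :
    DeltaN N θ (fun j => c * z j) = DeltaN N θ z := by
  simp only [DeltaN]
  congr 1; funext j; congr 1; funext k
  rw [mul_div_mul_left (z j) (z k) hc]

lemma deltaNM_smul {n m : ℕ} (θ : ℝ) (z : Fin n → ℂ) (w : Fin m → ℂ) (c : ℂ) (hc : c ≠ 0) :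
    DeltaNM n m θ (fun j => c * z j) (fun k => c * w k) = DeltaNM n m θ z w := by
  simp only [DeltaNM, deltaN_smul _ _ _ hc]
  congr 2
  funext j; congr 1; funext k
  rw [mul_div_mul_left (z j) (w k) hc, mul_div_mul_left (w k) (z j) hc]

-- degree of a monomial exponent
def Deg {σ : Type*} [Fintype σ] (a : σ →₀ ℕ) : ℕ := ∑ i : σ, a i

lemma finsupp_prod_pow_deg {σ : Type*} [Fintype σ] (a : σ →₀ ℕ) (c : ℂ) :
    (a.prod fun _ e => c ^ e) = c ^ Deg a := by
  classical
  have h0 : (a.prod fun _ e => c ^ e) = ∏ i ∈ a.support, c ^ a i := rfl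
  rw [h0, Finset.prod_pow_eq_pow_sum a.support (fun i => a i) c]
  congr 1
  unfold Deg
  refine Finset.sum_subset (f := fun i => a i) (Finset.subset_univ _)
    fun i _ hi => ?_
  exact Finsupp.notMem_support_iff.1 hi

lemma eval_monomial_smul {σ : Type*} [Fintype σ] (v : σ → ℂ) (c : ℂ) (a : σ →₀ ℕ) (k : ℂ) :
    MvPolynomial.eval (fun i => c * v i) (MvPolynomial.monomial a k)
      = c ^ Deg a * MvPolynomial.eval v (MvPolynomial.monomial a k) := by
  classical
  simp only [MvPolynomial.eval_monomial]
  have : (a.prod fun i e => (c * v i) ^ e)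
      = (a.prod fun _ e => c ^ e) * a.prod fun i e => (v i) ^ e := by
    rw [← Finsupp.prod_mul]
    exact Finsupp.prod_congr fun i _ => mul_pow c (v i) (a i)
  rw [this, finsupp_prod_pow_deg]
  ring

lemma starEval_smul_monomial {σ : Type*} [Fintype σ] (v : σ → ℂ) (c : ℂ) (b : σ →₀ ℕ) (k : ℂ) :
    starEval (MvPolynomial.monomial b k) (fun i => c * v i)
      = (c⁻¹) ^ Deg b * starEval (MvPolynomial.monomial b k) v := by
  classical
  simp only [starEval]
  have h1 : (fun i => ((starRingEnd ℂ) (c * v i))⁻¹)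
      = fun i => ((starRingEnd ℂ) c)⁻¹ * ((starRingEnd ℂ) (v i))⁻¹ := by
    funext i; rw [map_mul, mul_inv]
  rw [h1, eval_monomial_smul, map_mul, map_pow, map_inv₀, Complex.conj_conj]

lemma starEval_smul_c {σ : Type*} (q : MvPolynomial σ ℂ) (v : σ → ℂ) (c : ℂ) :
    starEval (c • q) v = (starRingEnd ℂ) c * starEval q v := by
  simp [starEval, MvPolynomial.smul_eval, map_mul]

lemma eval_smul_c {σ : Type*} (q : MvPolynomial σ ℂ) (v : σ → ℂ) (c : ℂ) :
    MvPolynomial.eval v (c • q) = c * MvPolynomial.eval v q := by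
  simp [MvPolynomial.smul_eval]

lemma starEval_add {σ : Type*} (p q : MvPolynomial σ ℂ) (v : σ → ℂ) :
    starEval (p + q) v = starEval p v + starEval q v := by
  simp [starEval, map_add]

lemma starEval_sum {σ ι : Type*} (S : Finset ι) (f : ι → MvPolynomial σ ℂ) (v : σ → ℂ) :
    starEval (∑ i ∈ S, f i) v = ∑ i ∈ S, starEval (f i) v := by
  simp [starEval, map_sum]


lemma eulerOp_monomial {σ : Type*} [Fintype σ] [DecidableEq σ] (a : σ →₀ ℕ) (c : ℂ) :
    eulerOp (MvPolynomial.monomial a c) = MvPolynomial.monomial a ((Deg a : ℂ) * c) := by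
  classical
  simp only [eulerOp, MvPolynomial.pderiv_monomial]
  have key : ∀ v : σ, (MvPolynomial.X v : MvPolynomial σ ℂ) *
      MvPolynomial.monomial (a - Finsupp.single v 1) (c * (a v))
      = MvPolynomial.monomial a ((a v : ℂ) * c) := by
    intro v
    by_cases h : a v = 0
    · simp [h]
    · rw [MvPolynomial.X, MvPolynomial.monomial_mul]
      congr 1
      · rw [add_comm, tsub_add_cancel_of_le]
        rw [Finsupp.single_le_iff]
        omega
      · ring
  rw [Finset.sum_congr rfl fun v _ => key v]
  rw [← map_sum (MvPolynomial.monomial a) (fun v => ((a v : ℂ) * c)) Finset.univ]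
  congr 1
  rw [← Finset.sum_mul]; unfold Deg
  push_cast
  ring

lemma eulerOp_sum {σ ι : Type*} [Fintype σ] (S : Finset ι) (f : ι → MvPolynomial σ ℂ) :
    eulerOp (∑ i ∈ S, f i) = ∑ i ∈ S, eulerOp (f i) := by
  simp only [eulerOp, map_sum, Finset.mul_sum]
  rw [Finset.sum_comm]

-- the inner integrand
def intg (n m : ℕ) (θ ξ ξ' : ℝ) (p q : MvPolynomial (Fin n ⊕ Fin m) ℂ)
    (x : Fin n → ℝ) (y : Fin m → ℝ) : ℂ :=
  DeltaNM n m θ (torus n ξ x) (torus m ξ' y) *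
    MvPolynomial.eval (Sum.elim (torus n ξ x) (torus m ξ' y)) p *
    starEval q (Sum.elim (torus n ξ x) (torus m ξ' y))

lemma cont_eval {σ : Type*} {α : Type*} [TopologicalSpace α] (q : MvPolynomial σ ℂ)
    {g : α → σ → ℂ} (hg : ∀ i, Continuous fun x => g x i) :
    Continuous fun x => MvPolynomial.eval (g x) q := by
  induction q using MvPolynomial.induction_on with
  | C a => simpa using continuous_const
  | add p q hp hq => simp only [map_add]; exact hp.add hq
  | mul_X p i hp => simp only [map_mul, MvPolynomial.eval_X]; exact hp.mul (hg i)

lemma cont_torus {n : ℕ} (ξ : ℝ) (j : Fin n) :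
    Continuous fun x : Fin n → ℝ => torus n ξ x j := by
  unfold torus
  exact continuous_const.mul (Complex.continuous_exp.comp
    (continuous_const.mul (Complex.continuous_ofReal.comp (continuous_apply j))))

lemma cross_ne_zero {a b : ℂ} {r s : ℝ} (ha : ‖a‖ = r) (hb : ‖b‖ = s)
    (hb0 : b ≠ 0) (hrs : r ≠ s) : (1 : ℂ) - a / b ≠ 0 := by
  intro h
  have hab : a / b = 1 := by linear_combination -h
  have : ‖a / b‖ = 1 := by rw [hab, norm_one]
  rw [norm_div, ha, hb] at this
  have hs0 : s ≠ 0 := by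
    intro h0; rw [h0] at this; simp at this
  exact hrs (by field_simp at this; exact this)

section ContIntg
variable {n m : ℕ} {θ ξ ξ' : ℝ}

lemma cont_intg (hθ : 0 < θ) (hξ : 0 < ξ) (hξ' : 0 < ξ') (hne : ξ ≠ ξ')
    (p q : MvPolynomial (Fin n ⊕ Fin m) ℂ) :
    Continuous fun s : (Fin n → ℝ) × (Fin m → ℝ) => intg n m θ ξ ξ' p q s.1 s.2 := by
  have hZ : ∀ j : Fin n, Continuous fun s : (Fin n → ℝ) × (Fin m → ℝ) => torus n ξ s.1 j :=
    fun j => (cont_torus ξ j).comp continuous_fst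
  have hW : ∀ k : Fin m, Continuous fun s : (Fin n → ℝ) × (Fin m → ℝ) => torus m ξ' s.2 k :=
    fun k => (cont_torus ξ' k).comp continuous_snd
  have hZ0 : ∀ (s : (Fin n → ℝ) × (Fin m → ℝ)) (j), torus n ξ s.1 j ≠ 0 :=
    fun s j => torus_ne_zero hξ _ j
  have hW0 : ∀ (s : (Fin n → ℝ) × (Fin m → ℝ)) (k), torus m ξ' s.2 k ≠ 0 :=
    fun s k => torus_ne_zero hξ' _ k
  have hdeltaN : ∀ (N : ℕ) (θ' : ℝ), 0 < θ' →
      ∀ (T : Fin N → ((Fin n → ℝ) × (Fin m → ℝ)) → ℂ), (∀ j, Continuous (T j)) →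
      (∀ s j, T j s ≠ 0) →
      Continuous fun s => DeltaN N θ' (fun j => T j s) := by
    intro N θ' hθ' T hT hT0
    unfold DeltaN
    apply continuous_finset_prod
    intro j _
    apply continuous_finset_prod
    intro k _
    by_cases hjk : j < k
    · simp only [if_pos hjk]
      apply Continuous.rpow_const
      · exact (continuous_norm.comp
          (continuous_const.sub ((hT j).div (hT k) (fun s => hT0 s k)))).pow 2
      · exact fun _ => Or.inr hθ'.le
    · simp only [if_neg hjk]; exact continuous_const
  have hnum : Continuous fun s : (Fin n → ℝ) × (Fin m → ℝ) =>
      ((DeltaN n θ (torus n ξ s.1) * DeltaN m θ⁻¹ (torus m ξ' s.2) : ℝ) : ℂ) := by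
    apply Complex.continuous_ofReal.comp
    exact ((hdeltaN n θ hθ _ hZ hZ0).mul (hdeltaN m θ⁻¹ (by positivity) _ hW hW0))
  have hden : Continuous fun s : (Fin n → ℝ) × (Fin m → ℝ) =>
      ∏ j : Fin n, ∏ k : Fin m,
        ((1 - torus n ξ s.1 j / torus m ξ' s.2 k) * (1 - torus m ξ' s.2 k / torus n ξ s.1 j)) := by
    apply continuous_finset_prod; intro j _
    apply continuous_finset_prod; intro k _
    exact ((continuous_const.sub ((hZ j).div (hW k) fun s => hW0 s k)).mul
      (continuous_const.sub ((hW k).div (hZ j) fun s => hZ0 s j)))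
  have hden0 : ∀ s : (Fin n → ℝ) × (Fin m → ℝ),
      (∏ j : Fin n, ∏ k : Fin m,
        ((1 - torus n ξ s.1 j / torus m ξ' s.2 k) * (1 - torus m ξ' s.2 k / torus n ξ s.1 j))) ≠ 0 := by
    intro s
    rw [Finset.prod_ne_zero_iff]
    intro j _
    rw [Finset.prod_ne_zero_iff]
    intro k _
    exact mul_ne_zero
      (cross_ne_zero (abs_torus hξ.le _ j) (abs_torus hξ'.le _ k) (hW0 s k) hne)
      (cross_ne_zero (abs_torus hξ'.le _ k) (abs_torus hξ.le _ j) (hZ0 s j) (Ne.symm hne))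
  have hDelta : Continuous fun s : (Fin n → ℝ) × (Fin m → ℝ) =>
      DeltaNM n m θ (torus n ξ s.1) (torus m ξ' s.2) := by
    unfold DeltaNM
    exact hnum.div hden hden0
  have helim : ∀ i : Fin n ⊕ Fin m, Continuous fun s : (Fin n → ℝ) × (Fin m → ℝ) =>
      Sum.elim (torus n ξ s.1) (torus m ξ' s.2) i := by
    intro i
    cases i with
    | inl j => simpa using hZ j
    | inr k => simpa using hW k
  have helim0 : ∀ (s : (Fin n → ℝ) × (Fin m → ℝ)) (i),
      Sum.elim (torus n ξ s.1) (torus m ξ' s.2) i ≠ 0 := by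
    intro s i
    cases i with
    | inl j => exact hZ0 s j
    | inr k => exact hW0 s k
  have hev : Continuous fun s : (Fin n → ℝ) × (Fin m → ℝ) =>
      MvPolynomial.eval (Sum.elim (torus n ξ s.1) (torus m ξ' s.2)) p :=
    cont_eval p helim
  have hstar : Continuous fun s : (Fin n → ℝ) × (Fin m → ℝ) =>
      starEval q (Sum.elim (torus n ξ s.1) (torus m ξ' s.2)) := by
    unfold starEval
    apply Complex.continuous_conj.comp
    apply cont_eval q
    intro i
    exact ((Complex.continuous_conj.comp (helim i)).inv₀
      (fun s => star_ne_zero.2 (helim0 s i)))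
  exact (hDelta.mul hev).mul hstar

end ContIntg

lemma isCompact_cube (k : ℕ) : IsCompact (cube k) :=
  isCompact_univ_pi fun _ => isCompact_Icc

lemma measurableSet_cube (k : ℕ) : MeasurableSet (cube k) :=
  MeasurableSet.univ_pi fun _ => measurableSet_Icc

lemma cube_vol_lt_top (k : ℕ) : volume (cube k) < ⊤ :=
  (isCompact_cube k).measure_lt_top

-- inner integrability for a jointly continuous function
lemma inner_integrableOn {n m : ℕ} (f : (Fin n → ℝ) → (Fin m → ℝ) → ℂ)
    (hf : Continuous fun s : (Fin n → ℝ) × (Fin m → ℝ) => f s.1 s.2) (x : Fin n → ℝ) :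
    IntegrableOn (fun y => f x y) (cube m) := by
  apply ContinuousOn.integrableOn_compact (isCompact_cube m)
  exact (hf.comp (Continuous.prodMk_right x)).continuousOn

-- outer integrability of the inner integral
lemma outer_integrableOn {n m : ℕ} (f : (Fin n → ℝ) → (Fin m → ℝ) → ℂ)
    (hf : Continuous fun s : (Fin n → ℝ) × (Fin m → ℝ) => f s.1 s.2) :
    IntegrableOn (fun x => ∫ y in cube m, f x y) (cube n) := by
  obtain ⟨C, hC⟩ := (IsCompact.exists_bound_of_continuousOn
    ((isCompact_cube n).prod (isCompact_cube m)) hf.continuousOn)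
  have hmeas : StronglyMeasurable fun x => ∫ y in cube m, f x y := by
    have := MeasureTheory.StronglyMeasurable.integral_prod_right'
      (ν := volume.restrict (cube m))
      (f := fun s : (Fin n → ℝ) × (Fin m → ℝ) => f s.1 s.2) hf.stronglyMeasurable
    exact this
  apply MeasureTheory.Measure.integrableOn_of_bounded (cube_vol_lt_top n).ne
    hmeas.aestronglyMeasurable (M := |C| * (volume (cube m)).toReal)
  rw [MeasureTheory.ae_restrict_iff' (measurableSet_cube n)]
  refine Filter.Eventually.of_forall fun x hx => ?_
  apply MeasureTheory.norm_setIntegral_le_of_norm_le_const (cube_vol_lt_top m)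
  · intro y hy
    exact le_trans (hC (x, y) (Set.mk_mem_prod hx hy)) (le_abs_self C)

-- exchanging a finite sum with the double set integral
lemma double_integral_sum {n m : ℕ} {ι : Type*} (S : Finset ι)
    (f : ι → (Fin n → ℝ) → (Fin m → ℝ) → ℂ)
    (hf : ∀ i, Continuous fun s : (Fin n → ℝ) × (Fin m → ℝ) => f i s.1 s.2) :
    (∫ x in cube n, ∫ y in cube m, ∑ i ∈ S, f i x y)
      = ∑ i ∈ S, ∫ x in cube n, ∫ y in cube m, f i x y := by
  have h1 : ∀ x : Fin n → ℝ, (∫ y in cube m, ∑ i ∈ S, f i x y)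
      = ∑ i ∈ S, ∫ y in cube m, f i x y := by
    intro x
    exact MeasureTheory.integral_finset_sum S fun i _ => inner_integrableOn (f i) (hf i) x
  rw [MeasureTheory.integral_congr_ae (Filter.Eventually.of_forall h1)]
  exact MeasureTheory.integral_finset_sum S fun i _ => outer_integrableOn (f i) (hf i)


lemma sprod_eq (n m : ℕ) (θ ξ ξ' : ℝ) (p q : MvPolynomial (Fin n ⊕ Fin m) ℂ) :
    sprod n m θ ξ ξ' p q
      = ((1 / (n.factorial * m.factorial * (2 * Real.pi) ^ (n + m)) : ℝ) : ℂ) *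
        ∫ x in cube n, ∫ y in cube m, intg n m θ ξ ξ' p q x y := rfl

section Main
variable {n m : ℕ} {θ ξ ξ' : ℝ}

-- periodicity of the integrand
lemma intg_periodic_x (p q : MvPolynomial (Fin n ⊕ Fin m) ℂ) (x : Fin n → ℝ) (y : Fin m → ℝ)
    (u : Fin n → ℤ) :
    intg n m θ ξ ξ' p q (fun i => x i + (2 * Real.pi) * u i) y = intg n m θ ξ ξ' p q x y := by
  unfold intg
  rw [torus_periodic]

lemma intg_periodic_y (p q : MvPolynomial (Fin n ⊕ Fin m) ℂ) (x : Fin n → ℝ) (y : Fin m → ℝ)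
    (v : Fin m → ℤ) :
    intg n m θ ξ ξ' p q x (fun k => y k + (2 * Real.pi) * v k) = intg n m θ ξ ξ' p q x y := by
  unfold intg
  rw [torus_periodic]

-- double shifted integral equality
lemma double_shift (f : (Fin n → ℝ) → (Fin m → ℝ) → ℂ)
    (hf : Continuous fun s : (Fin n → ℝ) × (Fin m → ℝ) => f s.1 s.2)
    (hpx : ∀ (x : Fin n → ℝ) (y : Fin m → ℝ) (u : Fin n → ℤ),
      f (fun i => x i + (2 * Real.pi) * u i) y = f x y)
    (hpy : ∀ (x : Fin n → ℝ) (y : Fin m → ℝ) (v : Fin m → ℤ),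
      f x (fun k => y k + (2 * Real.pi) * v k) = f x y) (φ : ℝ) :
    (∫ x in cube n, ∫ y in cube m, f (fun i => x i + φ) (fun k => y k + φ))
      = ∫ x in cube n, ∫ y in cube m, f x y := by
  have hin : ∀ x' : Fin n → ℝ,
      (∫ y in cube m, f x' (fun k => y k + φ)) = ∫ y in cube m, f x' y := by
    intro x'
    exact shift_integral_eq (f x') (hf.comp (Continuous.prodMk_right x')).measurable
      (fun y v => hpy x' y v) φ
  have step1 : (∫ x in cube n, ∫ y in cube m, f (fun i => x i + φ) (fun k => y k + φ))
      = ∫ x in cube n, (fun x' => ∫ y in cube m, f x' y) (fun i => x i + φ) := by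
    refine MeasureTheory.integral_congr_ae (Filter.Eventually.of_forall fun x => ?_)
    exact hin _
  rw [step1]
  have hmeas : Measurable fun x' : Fin n → ℝ => ∫ y in cube m, f x' y :=
    (MeasureTheory.StronglyMeasurable.integral_prod_right'
      (ν := volume.restrict (cube m))
      (f := fun s : (Fin n → ℝ) × (Fin m → ℝ) => f s.1 s.2) hf.stronglyMeasurable).measurable
  have hper : ∀ (x : Fin n → ℝ) (u : Fin n → ℤ),
      (fun x' : Fin n → ℝ => ∫ y in cube m, f x' y) (fun i => x i + (2 * Real.pi) * u i)
        = (fun x' : Fin n → ℝ => ∫ y in cube m, f x' y) x := by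
    intro x u
    refine MeasureTheory.integral_congr_ae (Filter.Eventually.of_forall fun y => ?_)
    exact hpx x y u
  exact shift_integral_eq (fun x' => ∫ y in cube m, f x' y) hmeas hper φ

-- rotation identity for monomials
lemma intg_rotate (a b : (Fin n ⊕ Fin m) →₀ ℕ) (ca cb : ℂ) (x : Fin n → ℝ) (y : Fin m → ℝ)
    (φ : ℝ) :
    intg n m θ ξ ξ' (MvPolynomial.monomial a ca) (MvPolynomial.monomial b cb)
        (fun i => x i + φ) (fun k => y k + φ)
      = Complex.exp (Complex.I * φ) ^ Deg a * (Complex.exp (Complex.I * φ))⁻¹ ^ Deg b *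
        intg n m θ ξ ξ' (MvPolynomial.monomial a ca) (MvPolynomial.monomial b cb) x y := by
  set c := Complex.exp (Complex.I * φ) with hc
  have hc0 : c ≠ 0 := Complex.exp_ne_zero _
  unfold intg
  rw [torus_shift ξ x φ, torus_shift ξ' y φ, ← hc]
  have helim : (Sum.elim (fun j => c * torus n ξ x j) (fun k => c * torus m ξ' y k))
      = fun i => c * Sum.elim (torus n ξ x) (torus m ξ' y) i := by
    funext i; cases i <;> rfl
  rw [deltaNM_smul θ _ _ c hc0, helim, eval_monomial_smul, starEval_smul_monomial]
  ring

-- orthogonality of monomials of distinct total degrees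
lemma ortho (hθ : 0 < θ) (hξ : 0 < ξ) (hξ' : 0 < ξ') (hne : ξ ≠ ξ')
    (a b : (Fin n ⊕ Fin m) →₀ ℕ) (ca cb : ℂ) (hab : Deg a ≠ Deg b) :
    (∫ x in cube n, ∫ y in cube m,
      intg n m θ ξ ξ' (MvPolynomial.monomial a ca) (MvPolynomial.monomial b cb) x y) = 0 := by
  set J := ∫ x in cube n, ∫ y in cube m,
      intg n m θ ξ ξ' (MvPolynomial.monomial a ca) (MvPolynomial.monomial b cb) x y with hJ
  set D : ℝ := (Deg a : ℝ) - (Deg b : ℝ) with hD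
  have hD0 : D ≠ 0 := by
    rw [hD, sub_ne_zero]
    exact_mod_cast hab
  set φ := Real.pi / D with hφ
  set c := Complex.exp (Complex.I * φ) with hc
  have h1 : (∫ x in cube n, ∫ y in cube m,
      intg n m θ ξ ξ' (MvPolynomial.monomial a ca) (MvPolynomial.monomial b cb)
        (fun i => x i + φ) (fun k => y k + φ)) = J := by
    exact double_shift _ (cont_intg hθ hξ hξ' hne _ _)
      (fun x y u => intg_periodic_x _ _ x y u) (fun x y v => intg_periodic_y _ _ x y v) φ
  have h2 : (∫ x in cube n, ∫ y in cube m,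
      intg n m θ ξ ξ' (MvPolynomial.monomial a ca) (MvPolynomial.monomial b cb)
        (fun i => x i + φ) (fun k => y k + φ))
      = c ^ Deg a * c⁻¹ ^ Deg b * J := by
    have hpt : ∀ (x : Fin n → ℝ) (y : Fin m → ℝ),
        intg n m θ ξ ξ' (MvPolynomial.monomial a ca) (MvPolynomial.monomial b cb)
          (fun i => x i + φ) (fun k => y k + φ)
        = c ^ Deg a * c⁻¹ ^ Deg b *
          intg n m θ ξ ξ' (MvPolynomial.monomial a ca) (MvPolynomial.monomial b cb) x y :=
      fun x y => intg_rotate a b ca cb x y φ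
    calc (∫ x in cube n, ∫ y in cube m, intg n m θ ξ ξ' (MvPolynomial.monomial a ca)
            (MvPolynomial.monomial b cb) (fun i => x i + φ) (fun k => y k + φ))
        = ∫ x in cube n, c ^ Deg a * c⁻¹ ^ Deg b * ∫ y in cube m,
            intg n m θ ξ ξ' (MvPolynomial.monomial a ca) (MvPolynomial.monomial b cb) x y := by
          refine MeasureTheory.integral_congr_ae (Filter.Eventually.of_forall fun x => ?_)
          beta_reduce
          rw [← MeasureTheory.integral_const_mul]
          exact MeasureTheory.integral_congr_ae (Filter.Eventually.of_forall fun y => hpt x y)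
      _ = c ^ Deg a * c⁻¹ ^ Deg b * J := by
          rw [MeasureTheory.integral_const_mul]
  have hE : c ^ Deg a * c⁻¹ ^ Deg b = -1 := by
    rw [hc, ← Complex.exp_nat_mul, ← Complex.exp_neg, ← Complex.exp_nat_mul, ← Complex.exp_add]
    have hDφ : (((Deg a : ℝ) - (Deg b : ℝ)) * φ : ℝ) = Real.pi := by
      rw [hφ, ← hD]
      field_simp
    have harg : (Deg a : ℂ) * (Complex.I * φ) + (Deg b : ℂ) * -(Complex.I * φ)
        = Real.pi * Complex.I := by
      calc (Deg a : ℂ) * (Complex.I * φ) + (Deg b : ℂ) * -(Complex.I * φ)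
          = ((((Deg a : ℝ) - (Deg b : ℝ)) * φ : ℝ) : ℂ) * Complex.I := by push_cast; ring
        _ = Real.pi * Complex.I := by rw [hDφ]
    rw [harg, Complex.exp_pi_mul_I]
  have hJE : (-1 : ℂ) * J = J := by rw [← hE, ← h2, h1]
  have h2J : (2 : ℂ) * J = 0 := by linear_combination -hJE
  rcases mul_eq_zero.1 h2J with h | h
  · exact absurd h two_ne_zero
  · exact h

end Main

section Final
variable {n m : ℕ} {θ ξ ξ' : ℝ}

lemma intg_sum_sum {ι κ : Type*} (S : Finset ι) (T : Finset κ)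
    (P : ι → MvPolynomial (Fin n ⊕ Fin m) ℂ) (Q : κ → MvPolynomial (Fin n ⊕ Fin m) ℂ)
    (x : Fin n → ℝ) (y : Fin m → ℝ) :
    intg n m θ ξ ξ' (∑ i ∈ S, P i) (∑ j ∈ T, Q j) x y
      = ∑ ij ∈ S ×ˢ T, intg n m θ ξ ξ' (P ij.1) (Q ij.2) x y := by
  unfold intg
  simp only [map_sum, starEval_sum, Finset.mul_sum, Finset.sum_mul, Finset.sum_product]
  exact Finset.sum_comm

lemma sprod_sum_sum (hθ : 0 < θ) (hξ : 0 < ξ) (hξ' : 0 < ξ') (hne : ξ ≠ ξ')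
    {ι κ : Type*} (S : Finset ι) (T : Finset κ)
    (P : ι → MvPolynomial (Fin n ⊕ Fin m) ℂ) (Q : κ → MvPolynomial (Fin n ⊕ Fin m) ℂ) :
    sprod n m θ ξ ξ' (∑ i ∈ S, P i) (∑ j ∈ T, Q j)
      = ∑ i ∈ S, ∑ j ∈ T, sprod n m θ ξ ξ' (P i) (Q j) := by
  rw [sprod_eq]
  have h1 : (∫ x in cube n, ∫ y in cube m,
        intg n m θ ξ ξ' (∑ i ∈ S, P i) (∑ j ∈ T, Q j) x y)
      = ∑ ij ∈ S ×ˢ T, ∫ x in cube n, ∫ y in cube m,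
        intg n m θ ξ ξ' (P ij.1) (Q ij.2) x y := by
    rw [← double_integral_sum (S ×ˢ T)
      (fun ij x y => intg n m θ ξ ξ' (P ij.1) (Q ij.2) x y)
      (fun ij => cont_intg hθ hξ hξ' hne _ _)]
    congr 1
    funext x
    refine MeasureTheory.integral_congr_ae (Filter.Eventually.of_forall fun y => ?_)
    exact intg_sum_sum S T P Q x y
  rw [h1, Finset.mul_sum, Finset.sum_product]
  exact Finset.sum_congr rfl fun i _ => Finset.sum_congr rfl fun j _ =>
    (sprod_eq n m θ ξ ξ' (P i) (Q j)).symm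

lemma sprod_smul_left (c : ℂ) (p q : MvPolynomial (Fin n ⊕ Fin m) ℂ) :
    sprod n m θ ξ ξ' (c • p) q = c * sprod n m θ ξ ξ' p q := by
  rw [sprod_eq, sprod_eq]
  have hpt : ∀ x y, intg n m θ ξ ξ' (c • p) q x y = c * intg n m θ ξ ξ' p q x y := by
    intro x y; unfold intg; rw [eval_smul_c]; ring
  have h1 : (∫ x in cube n, ∫ y in cube m, intg n m θ ξ ξ' (c • p) q x y)
      = c * ∫ x in cube n, ∫ y in cube m, intg n m θ ξ ξ' p q x y := by
    rw [← MeasureTheory.integral_const_mul]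
    refine MeasureTheory.integral_congr_ae (Filter.Eventually.of_forall fun x => ?_)
    beta_reduce
    rw [← MeasureTheory.integral_const_mul]
    exact MeasureTheory.integral_congr_ae (Filter.Eventually.of_forall fun y => hpt x y)
  rw [h1]; ring

lemma sprod_smul_right (c : ℂ) (p q : MvPolynomial (Fin n ⊕ Fin m) ℂ) :
    sprod n m θ ξ ξ' p (c • q) = (starRingEnd ℂ) c * sprod n m θ ξ ξ' p q := by
  rw [sprod_eq, sprod_eq]
  have hpt : ∀ x y, intg n m θ ξ ξ' p (c • q) x y
      = (starRingEnd ℂ) c * intg n m θ ξ ξ' p q x y := by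
    intro x y; unfold intg; rw [starEval_smul_c]; ring
  have h1 : (∫ x in cube n, ∫ y in cube m, intg n m θ ξ ξ' p (c • q) x y)
      = (starRingEnd ℂ) c * ∫ x in cube n, ∫ y in cube m, intg n m θ ξ ξ' p q x y := by
    rw [← MeasureTheory.integral_const_mul]
    refine MeasureTheory.integral_congr_ae (Filter.Eventually.of_forall fun x => ?_)
    beta_reduce
    rw [← MeasureTheory.integral_const_mul]
    exact MeasureTheory.integral_congr_ae (Filter.Eventually.of_forall fun y => hpt x y)
  rw [h1]; ring

lemma key_monomial (hθ : 0 < θ) (hξ : 0 < ξ) (hξ' : 0 < ξ') (hne : ξ ≠ ξ')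
    (a b : (Fin n ⊕ Fin m) →₀ ℕ) (ca cb : ℂ) :
    sprod n m θ ξ ξ' (eulerOp (MvPolynomial.monomial a ca)) (MvPolynomial.monomial b cb)
      = sprod n m θ ξ ξ' (MvPolynomial.monomial a ca)
          (eulerOp (MvPolynomial.monomial b cb)) := by
  classical
  rw [eulerOp_monomial, eulerOp_monomial]
  have h1 : (MvPolynomial.monomial a ((Deg a : ℂ) * ca))
      = (Deg a : ℂ) • MvPolynomial.monomial a ca := by
    rw [← smul_eq_mul]; exact (MvPolynomial.smul_monomial _).symm
  have h2 : (MvPolynomial.monomial b ((Deg b : ℂ) * cb))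
      = (Deg b : ℂ) • MvPolynomial.monomial b cb := by
    rw [← smul_eq_mul]; exact (MvPolynomial.smul_monomial _).symm
  rw [h1, h2, sprod_smul_left, sprod_smul_right, map_natCast]
  by_cases hd : Deg a = Deg b
  · rw [hd]
  · have h0 : sprod n m θ ξ ξ' (MvPolynomial.monomial a ca) (MvPolynomial.monomial b cb)
        = 0 := by
      rw [sprod_eq, ortho hθ hξ hξ' hne a b ca cb hd, mul_zero]
    rw [h0, mul_zero, mul_zero]

end Final


/-- the Euler operator is symmetric with respect to `⟨·,·⟩'_{n,m,θ}`. -/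
theorem euler_symmetric (n m : ℕ) (hn : 0 < n) (hm : 0 < m)
    (θ ξ ξ' : ℝ) (hθ : 0 < θ) (hξ : 0 < ξ) (hξ' : 0 < ξ') (hne : ξ ≠ ξ')
    (p q : MvPolynomial (Fin n ⊕ Fin m) ℂ) :
    sprod n m θ ξ ξ' (eulerOp p) q = sprod n m θ ξ ξ' p (eulerOp q) := by
  classical
  have hp := MvPolynomial.support_sum_monomial_coeff p
  have hq := MvPolynomial.support_sum_monomial_coeff q
  conv_lhs => rw [← hp, ← hq]
  conv_rhs => rw [← hp, ← hq]
  rw [eulerOp_sum, eulerOp_sum]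
  rw [sprod_sum_sum hθ hξ hξ' hne, sprod_sum_sum hθ hξ hξ' hne]
  exact Finset.sum_congr rfl fun a _ => Finset.sum_congr rfl fun b _ =>
    key_monomial hθ hξ hξ' hne a b _ _

end
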